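/- Let n ≥ 1, let S ⊆ ℝⁿ, and let x ∈ S be a point at which the coverage of S is infinite, i.e., for every r > 0 there exist q ∈ ℝⁿ and s > r with x ∈ B(q, s) ⊆ S. Then S contains an open halfspace H with x on its boundary; that is, there exists a nonzero vector u ∈ ℝⁿ such that {y ∈ ℝⁿ : ⟪u, y − x⟫ > 0} ⊆ S. -/

import Mathlib

open Metric RealInnerProductSpace Topology

/-- If `S ⊆ ℝⁿ` has infinite coverage at `x ∈ S` (anchors of arbitrarily large radius
exist for `x`), then `S` contains an open halfspace with `x` on its boundary. -/
theorem infinite_coverage_label_contains_halfspace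
    (n : ℕ) (hn : 1 ≤ n) (S : Set (EuclideanSpace ℝ (Fin n)))
    (x : EuclideanSpace ℝ (Fin n)) (hxS : x ∈ S)
    (hcov : ∀ r : ℝ, 0 < r → ∃ (q : EuclideanSpace ℝ (Fin n)) (s : ℝ),
      r < s ∧ x ∈ ball q s ∧ ball q s ⊆ S) :
    ∃ u : EuclideanSpace ℝ (Fin n), u ≠ 0 ∧
      {y : EuclideanSpace ℝ (Fin n) | ⟪u, y - x⟫ > 0} ⊆ S := by
  by_cases hb : ∀ R : ℝ, ∃ q s, x ∈ ball q s ∧ ball q s ⊆ S ∧ R ≤ ‖q - x‖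
  · choose q s hx hsub hd using fun k : ℕ => hb (k + 1)
    set d : ℕ → ℝ := fun k => ‖q k - x‖ with hdd
    have hdpos : ∀ k, 0 < d k := fun k => lt_of_lt_of_le (by positivity) (hd k)
    set u : ℕ → EuclideanSpace ℝ (Fin n) := fun k => (d k)⁻¹ • (q k - x) with hu
    have hnorm : ∀ k, u k ∈ sphere (0 : EuclideanSpace ℝ (Fin n)) 1 := by
      intro k
      simp only [hu, mem_sphere_iff_norm, sub_zero, norm_smul, Real.norm_eq_abs,
        abs_of_pos (inv_pos.2 (hdpos k))]
      exact inv_mul_cancel₀ (hdpos k).ne'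
    obtain ⟨u₀, hu₀, φ, hφ, hconv⟩ :=
      (isCompact_sphere (0 : EuclideanSpace ℝ (Fin n)) 1).tendsto_subseq hnorm
    have hu₀norm : ‖u₀‖ = 1 := by simpa [mem_sphere_iff_norm] using hu₀
    refine ⟨u₀, ?_, ?_⟩
    · intro h
      rw [h] at hu₀norm
      simp at hu₀norm
    intro y hy
    set ε := ⟪u₀, y - x⟫ with hε
    have hεpos : 0 < ε := hy
    have hinner : Filter.Tendsto (fun j => ⟪u (φ j), y - x⟫) Filter.atTop (𝓝 ε) :=
      hconv.inner tendsto_const_nhds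
    have hev : ∀ᶠ j in Filter.atTop, ε / 2 < ⟪u (φ j), y - x⟫ :=
      hinner.eventually (eventually_gt_nhds (by linarith))
    obtain ⟨J, hJ⟩ := Filter.eventually_atTop.1 hev
    obtain ⟨N, hN⟩ := exists_nat_ge (‖y - x‖ ^ 2 / ε)
    set j := max J N
    have h1 : ε / 2 < ⟪u (φ j), y - x⟫ := hJ j (le_max_left _ _)
    have hdj : ‖y - x‖ ^ 2 / ε ≤ d (φ j) := by
      calc ‖y - x‖ ^ 2 / ε ≤ (N : ℝ) := hN
        _ ≤ (φ j : ℝ) := by exact_mod_cast Nat.cast_le.2 ((le_max_right J N).trans hφ.le_apply)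
        _ ≤ (φ j : ℝ) + 1 := by linarith
        _ ≤ d (φ j) := hd (φ j)
    have hdy : ‖y - x‖ ^ 2 ≤ d (φ j) * ε := by
      rw [div_le_iff₀ hεpos] at hdj
      linarith
    have hyq : y - q (φ j) = (y - x) - d (φ j) • u (φ j) := by
      have : d (φ j) • u (φ j) = q (φ j) - x := by
        rw [hu]
        exact smul_inv_smul₀ (hdpos (φ j)).ne' _
      rw [this]
      abel
    have hsq : ‖y - q (φ j)‖ ^ 2 < d (φ j) ^ 2 := by
      rw [hyq, @norm_sub_sq_real]
      rw [real_inner_smul_right, real_inner_comm (u (φ j)) (y - x)]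
      have hnu : ‖d (φ j) • u (φ j)‖ = d (φ j) := by
        rw [norm_smul, Real.norm_eq_abs, abs_of_pos (hdpos (φ j)),
          mem_sphere_zero_iff_norm.1 (hnorm (φ j)), mul_one]
      rw [hnu]
      have := hdpos (φ j)
      nlinarith
    have hlt : ‖y - q (φ j)‖ < d (φ j) := by
      have := lt_of_pow_lt_pow_left₀ 2 (hdpos (φ j)).le hsq
      exact this
    apply hsub (φ j)
    rw [mem_ball, dist_eq_norm]
    calc ‖y - q (φ j)‖ < d (φ j) := hlt
      _ = dist x (q (φ j)) := by rw [dist_eq_norm]; exact (norm_sub_rev _ _).symm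
      _ < s (φ j) := hx (φ j)
  · push_neg at hb
    obtain ⟨R, hR⟩ := hb
    refine ⟨EuclideanSpace.single ⟨0, hn⟩ (1 : ℝ), ?_, ?_⟩
    · intro h
      have := congrArg (fun v : EuclideanSpace ℝ (Fin n) => v ⟨0, hn⟩) h
      simp [EuclideanSpace.single_apply] at this
    intro y _
    obtain ⟨q₀, s₀, hs₀, hx₀, hsub₀⟩ := hcov 1 one_pos
    have hR0 : 0 < R := lt_of_le_of_lt (norm_nonneg _) (hR q₀ s₀ hx₀ hsub₀)
    have hr : 0 < ‖y - x‖ + R := by positivity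
    obtain ⟨q, s, hs, hx', hsub'⟩ := hcov _ hr
    apply hsub'
    rw [mem_ball]
    calc dist y q ≤ dist y x + dist x q := dist_triangle _ _ _
      _ < ‖y - x‖ + R := by
          rw [dist_eq_norm]
          have : dist x q < R := by rw [dist_eq_norm, ← norm_sub_rev]; exact hR q s hx' hsub'
          linarith
      _ < s := hs
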